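/- Let T be a σ-compact locally compact Hausdorff space, S : T → Set ℝ^d convex-valued with C(S) := {y ∈ C₀(T;ℝ^d) | y t ∈ S t ∀t} nonempty. If the support function identity σ_{C(S)}(θ) = ∫ σ_S(dθ/d|θ|) d|θ| holds for all finite ℝ^d-valued regular measures θ, then S is inner semicontinuous. -/

import Mathlib

open MeasureTheory Set Filter Topology
open scoped BigOperators

def IsInnerSemicont {T X : Type*} [TopologicalSpace T] [TopologicalSpace X]
    (S : T → Set X) : Prop :=
  ∀ O : Set X, IsOpen O → IsOpen {t | (S t ∩ O).Nonempty}

noncomputable def erealPos (x : EReal) : ENNReal :=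
  if x = ⊤ then ⊤ else ENNReal.ofReal x.toReal

noncomputable def erealIntegral {T : Type*} [MeasurableSpace T]
    (ν : Measure T) (f : T → EReal) : EReal :=
  ((∫⁻ t, erealPos (f t) ∂ν : ENNReal) : EReal) - ((∫⁻ t, erealPos (-(f t)) ∂ν : ENNReal) : EReal)

lemma erealPos_sub_erealPos_neg (x : EReal) :
    ((erealPos x : ENNReal) : EReal) - ((erealPos (-x) : ENNReal) : EReal) = x := by
  induction x using EReal.rec with
  | bot => simp [erealPos]
  | top => simp [erealPos]
  | coe r =>
    have hp : ∀ s : ℝ, erealPos (s : EReal) = ENNReal.ofReal s := by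
      intro s; simp [erealPos]
    rw [show -(r : EReal) = ((-r : ℝ) : EReal) from (EReal.coe_neg r).symm, hp, hp,
      EReal.coe_ennreal_ofReal, EReal.coe_ennreal_ofReal, ← EReal.coe_sub]
    congr 1
    rcases le_total 0 r with h | h
    · rw [max_eq_left h, max_eq_right (by linarith)]; ring
    · rw [max_eq_right h, max_eq_left (by linarith)]; ring

lemma dirac_regular {T : Type*} [TopologicalSpace T] [T1Space T] [MeasurableSpace T]
    [OpensMeasurableSpace T] (t₀ : T) : (Measure.dirac t₀).Regular := by
  have houter : (Measure.dirac t₀).OuterRegular := by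
    constructor
    intro A hA r hr
    by_cases h : t₀ ∈ A
    · refine ⟨Set.univ, subset_univ A, isOpen_univ, ?_⟩
      rwa [Measure.dirac_apply_of_mem (mem_univ t₀), ← Measure.dirac_apply_of_mem h]
    · refine ⟨{t₀}ᶜ, ?_, isClosed_singleton.isOpen_compl, ?_⟩
      · intro x hx
        simp only [mem_compl_iff, mem_singleton_iff]
        rintro rfl; exact h hx
      · have h0 : Measure.dirac t₀ {t₀}ᶜ = 0 := by
          rw [Measure.dirac_apply' _ (measurableSet_singleton t₀).compl]
          simp
        rw [h0]
        exact lt_of_le_of_lt zero_le hr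
  refine ⟨?_⟩
  intro U hU r hr
  by_cases h : t₀ ∈ U
  · refine ⟨{t₀}, singleton_subset_iff.mpr h, isCompact_singleton, ?_⟩
    rwa [Measure.dirac_apply_of_mem (mem_singleton t₀), ← Measure.dirac_apply_of_mem h]
  · exfalso
    have h0 : Measure.dirac t₀ U = 0 := by
      rw [Measure.dirac_apply' _ hU.measurableSet]
      simp [h]
    rw [h0] at hr
    exact (not_lt_of_ge (zero_le : 0 ≤ r)) hr

lemma erealIntegral_dirac {T : Type*} [MeasurableSpace T] [MeasurableSingletonClass T]
    (t₀ : T) (f : T → EReal) : erealIntegral (Measure.dirac t₀) f = f t₀ := by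
  unfold erealIntegral
  rw [lintegral_dirac, lintegral_dirac]
  exact erealPos_sub_erealPos_neg (f t₀)

/-- Necessity of inner semicontinuity for the support function identity: if the identity
`σ_{C(S)}(θ) = ∫ σ_S(dθ/d|θ|) d|θ|` holds for every finite regular vector measure `θ`
(encoded by its total variation `ν` and a.e.-unit-norm density `w`), then `S` is
inner semicontinuous. -/
theorem isInnerSemicont_of_support_function_representation {d : ℕ} {T : Type*}
    [TopologicalSpace T] [SigmaCompactSpace T] [LocallyCompactSpace T] [T2Space T]
    [MeasurableSpace T] [BorelSpace T]
    (S : T → Set (Fin d → ℝ)) (hconv : ∀ t, Convex ℝ (S t))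
    (hsel : ∃ y : ZeroAtInftyContinuousMap T (Fin d → ℝ), ∀ t, y t ∈ S t)
    (hrep : ∀ ν : Measure T, IsFiniteMeasure ν → ν.Regular →
      ∀ w : T → Fin d → ℝ, Measurable w → (∀ᵐ t ∂ν, ‖w t‖ = 1) →
      (⨆ y : {y : ZeroAtInftyContinuousMap T (Fin d → ℝ) // ∀ t, y t ∈ S t},
          ((∫ t, ∑ i, y.1 t i * w t i ∂ν : ℝ) : EReal))
        = erealIntegral ν (fun t => ⨆ v ∈ S t, ((∑ i, w t i * v i : ℝ) : EReal))) :
    IsInnerSemicont S := by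
  classical
  obtain ⟨y₀, hy₀⟩ := hsel
  by_cases hd : d = 0
  · subst hd
    intro O hO
    rcases O.eq_empty_or_nonempty with rfl | ⟨x, hx⟩
    · simp only [inter_empty, Set.not_nonempty_empty, setOf_false]
      exact isOpen_empty
    · have : {t | (S t ∩ O).Nonempty} = Set.univ := by
        ext t
        simp only [mem_setOf_eq, mem_univ, iff_true]
        exact ⟨y₀ t, hy₀ t, by rwa [Subsingleton.elim (y₀ t) x]⟩
      rw [this]; exact isOpen_univ
  intro O hO
  by_contra hopen
  rw [isOpen_iff_mem_nhds] at hopen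
  push_neg at hopen
  obtain ⟨t₀, ht₀, hnhds⟩ := hopen
  set A : Set T := {t | (S t ∩ O).Nonempty}ᶜ with hA
  have hF : (𝓝 t₀ ⊓ Filter.principal A).NeBot := by
    rw [Filter.neBot_iff]
    intro hbot
    rw [Filter.inf_principal_eq_bot] at hbot
    exact hnhds (by simpa [hA] using hbot)
  obtain ⟨v₀, hv₀S, hv₀O⟩ := ht₀
  obtain ⟨ε, hε, hball⟩ := Metric.isOpen_iff.mp hO v₀ hv₀O
  -- separation step
  have key : ∀ t ∈ A, ∃ w : Fin d → ℝ, ‖w‖ = 1 ∧ ∀ v ∈ S t,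
      ∑ i, w i * v i ≤ ∑ i, w i * v₀ i - ε / 2 := by
    intro t ht
    have hdisj : Disjoint (Metric.ball v₀ ε) (S t) := by
      rw [Set.disjoint_left]
      intro v hvb hvS
      exact ht ⟨v, hvS, hball hvb⟩
    obtain ⟨f, u, hfu, huf⟩ :=
      geometric_hahn_banach_open (convex_ball v₀ ε) Metric.isOpen_ball (hconv t) hdisj
    set g : Fin d → ℝ := fun i => f (Pi.single i 1) with hg
    have hfg : ∀ x : Fin d → ℝ, f x = ∑ i, g i * x i := by
      intro x
      have hx : x = ∑ i : Fin d, Pi.single i (x i) := (Finset.univ_sum_single x).symm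
      calc f x = f (∑ i : Fin d, Pi.single i (x i)) := by rw [← hx]
        _ = ∑ i : Fin d, f (Pi.single i (x i)) := map_sum f _ _
        _ = ∑ i, g i * x i := by
            refine Finset.sum_congr rfl fun i _ => ?_
            have : Pi.single i (x i) = x i • (Pi.single i (1 : ℝ) : Fin d → ℝ) := by
              rw [← Pi.single_smul, smul_eq_mul, mul_one]
            rw [this, f.map_smul, smul_eq_mul, mul_comm]
    have hv₀u : f v₀ < u := hfu v₀ (Metric.mem_ball_self hε)
    have hc : 0 < u - f v₀ := by linarith
    -- operator norm bound : ‖f‖ ≤ (u - f v₀) / (ε/2)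
    have hfb : ∀ x : Fin d → ℝ, ‖x‖ < ε → |f x| ≤ u - f v₀ := by
      intro x hx
      have h1 : ∀ z : Fin d → ℝ, ‖z‖ < ε → f z < u - f v₀ := by
        intro z hz
        have : v₀ + z ∈ Metric.ball v₀ ε := by
          rw [Metric.mem_ball, dist_eq_norm]
          simpa using hz
        have := hfu _ this
        simp only [map_add] at this
        linarith
      have h2 := h1 x hx
      have h3 := h1 (-x) (by simpa using hx)
      rw [map_neg] at h3
      rw [abs_le]; constructor <;> linarith
    have hfnorm : ‖f‖ ≤ (u - f v₀) / (ε / 2) := by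
      refine ContinuousLinearMap.opNorm_le_of_shell (ε_pos := hε)
        (hC := by positivity) (c := (2 : ℝ)) (by norm_num) ?_
      intro x hx1 hx2
      have hxε : ε / 2 ≤ ‖x‖ := by
        rwa [show ‖(2:ℝ)‖ = 2 by simp] at hx1
      calc ‖f x‖ ≤ u - f v₀ := hfb x hx2
        _ = (u - f v₀) / (ε / 2) * (ε / 2) := by field_simp
        _ ≤ (u - f v₀) / (ε / 2) * ‖x‖ := by
            apply mul_le_mul_of_nonneg_left hxε (by positivity)
    have hgf : ‖g‖ ≤ ‖f‖ := by
      refine (pi_norm_le_iff_of_nonneg (norm_nonneg f)).mpr fun i => ?_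
      calc ‖g i‖ = ‖f (Pi.single i 1)‖ := rfl
        _ ≤ ‖f‖ * ‖(Pi.single i (1:ℝ) : Fin d → ℝ)‖ := f.le_opNorm _
        _ = ‖f‖ := by rw [Pi.norm_single, norm_one, mul_one]
    have hgne : g ≠ 0 := by
      intro h0
      obtain ⟨v, hv⟩ : (S t).Nonempty := ⟨y₀ t, hy₀ t⟩
      have h1 : f v = 0 := by rw [hfg]; simp [h0]
      have h2 : f v₀ = 0 := by rw [hfg]; simp [h0]
      have := huf v hv
      rw [h1] at this
      rw [h2] at hv₀u
      linarith
    have hgpos : 0 < ‖g‖ := norm_pos_iff.mpr hgne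
    -- key quantitative inequality : f v₀ + (ε/2) * ‖g‖ ≤ u
    have hquant : f v₀ + ε / 2 * ‖g‖ ≤ u := by
      have h1 : ‖f‖ * (ε / 2) ≤ u - f v₀ := by
        have := mul_le_mul_of_nonneg_right hfnorm (le_of_lt (by positivity : (0:ℝ) < ε / 2))
        calc ‖f‖ * (ε / 2) ≤ (u - f v₀) / (ε / 2) * (ε / 2) := this
          _ = u - f v₀ := by field_simp
      nlinarith [mul_le_mul_of_nonneg_right hgf (le_of_lt (by positivity : (0:ℝ) < ε / 2))]
    refine ⟨-(‖g‖⁻¹ • g), ?_, ?_⟩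
    · rw [norm_neg, norm_smul, norm_inv, norm_norm, inv_mul_cancel₀ (ne_of_gt hgpos)]
    · intro v hv
      have hsum : ∀ v' : Fin d → ℝ, ∑ i, (-(‖g‖⁻¹ • g)) i * v' i = -(‖g‖⁻¹ * f v') := by
        intro v'
        rw [hfg, Finset.mul_sum, ← Finset.sum_neg_distrib]
        refine Finset.sum_congr rfl fun i _ => ?_
        simp only [Pi.neg_apply, Pi.smul_apply, smul_eq_mul]
        ring
      rw [hsum v, hsum v₀]
      have h1 : u ≤ f v := huf v hv
      have h2 : f v₀ + ε / 2 * ‖g‖ ≤ f v := le_trans hquant h1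
      have h3 : ‖g‖⁻¹ * (f v₀ + ε / 2 * ‖g‖) ≤ ‖g‖⁻¹ * f v :=
        mul_le_mul_of_nonneg_left h2 (by positivity)
      have h4 : ‖g‖⁻¹ * ‖g‖ = 1 := inv_mul_cancel₀ (ne_of_gt hgpos)
      nlinarith
  choose! W hW1 hW2 using key
  set F := 𝓝 t₀ ⊓ Filter.principal A with hFdef
  have hAF : A ∈ F := Filter.mem_inf_of_right (Filter.mem_principal_self A)
  have hWs : Filter.map W F ≤ Filter.principal (Metric.sphere (0 : Fin d → ℝ) 1) := by
    rw [Filter.le_principal_iff, Filter.mem_map]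
    filter_upwards [hAF] with t ht
    simp only [mem_preimage, mem_sphere_iff_norm, sub_zero]
    exact hW1 t ht
  haveI : (Filter.map W F).NeBot := Filter.map_neBot
  obtain ⟨w, hwsph, hclw⟩ := (isCompact_sphere (0 : Fin d → ℝ) 1).exists_clusterPt hWs
  have hwnorm : ‖w‖ = 1 := by simpa [mem_sphere_iff_norm] using hwsph
  -- pass to the filter G where W tends to w
  set G := F ⊓ Filter.comap W (𝓝 w) with hGdef
  haveI hG : G.NeBot := by
    rw [hGdef, Filter.neBot_inf_comap_iff_map]
    rw [ClusterPt] at hclw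
    rwa [inf_comm] at hclw
  have hGF : G ≤ F := inf_le_left
  have hGt : Filter.Tendsto id G (𝓝 t₀) :=
    Filter.tendsto_id.mono_left (le_trans hGF inf_le_left)
  have hGW : Filter.Tendsto W G (𝓝 w) := Filter.tendsto_comap.mono_left inf_le_right
  have hAG : A ∈ G := hGF hAF
  -- uniform bound on the values of admissible selections at t₀
  have hbound : ∀ y : {y : ZeroAtInftyContinuousMap T (Fin d → ℝ) // ∀ t, y t ∈ S t},
      ∑ i, w i * y.1 t₀ i ≤ ∑ i, w i * v₀ i - ε / 2 := by
    intro y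
    have hyc : Filter.Tendsto (fun t => y.1 t) G (𝓝 (y.1 t₀)) :=
      ((map_continuous y.1).tendsto t₀).comp hGt
    have h1 : Filter.Tendsto (fun t => ∑ i, W t i * y.1 t i) G (𝓝 (∑ i, w i * y.1 t₀ i)) := by
      apply tendsto_finset_sum
      intro i _
      exact (((continuous_apply i).tendsto w).comp hGW).mul
        (((continuous_apply i).tendsto (y.1 t₀)).comp hyc)
    have h2 : Filter.Tendsto (fun t => ∑ i, W t i * v₀ i - ε / 2) G
        (𝓝 (∑ i, w i * v₀ i - ε / 2)) := by
      apply Filter.Tendsto.sub_const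
      apply tendsto_finset_sum
      intro i _
      exact (((continuous_apply i).tendsto w).comp hGW).mul tendsto_const_nhds
    refine le_of_tendsto_of_tendsto h1 h2 ?_
    filter_upwards [hAG] with t ht
    exact hW2 t ht (y.1 t) (y.2 t)
  -- apply the representation hypothesis with the Dirac measure at t₀
  have hrep' := hrep (Measure.dirac t₀) inferInstance (dirac_regular t₀) (fun _ => w)
    measurable_const (Filter.Eventually.of_forall fun _ => hwnorm)
  rw [erealIntegral_dirac] at hrep'
  -- compute the left-hand side
  have hLHS : (⨆ y : {y : ZeroAtInftyContinuousMap T (Fin d → ℝ) // ∀ t, y t ∈ S t},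
      ((∫ t, ∑ i, y.1 t i * (fun _ => w) t i ∂(Measure.dirac t₀) : ℝ) : EReal))
      ≤ ((∑ i, w i * v₀ i - ε / 2 : ℝ) : EReal) := by
    refine iSup_le fun y => ?_
    rw [integral_dirac]
    rw [EReal.coe_le_coe_iff]
    calc ∑ i, y.1 t₀ i * w i = ∑ i, w i * y.1 t₀ i := by
          refine Finset.sum_congr rfl fun i _ => mul_comm _ _
      _ ≤ ∑ i, w i * v₀ i - ε / 2 := hbound y
  have hRHS : ((∑ i, w i * v₀ i : ℝ) : EReal)
      ≤ ⨆ v ∈ S t₀, ((∑ i, (fun _ : T => w) t₀ i * v i : ℝ) : EReal) := by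
    exact le_iSup₂ (f := fun (v : Fin d → ℝ) (_ : v ∈ S t₀) =>
      ((∑ i, w i * v i : ℝ) : EReal)) v₀ hv₀S
  rw [hrep'] at hLHS
  have : ((∑ i, w i * v₀ i : ℝ) : EReal) ≤ ((∑ i, w i * v₀ i - ε / 2 : ℝ) : EReal) :=
    le_trans hRHS hLHS
  rw [EReal.coe_le_coe_iff] at this
  linarith
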